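/- The subgroup of ZW spanned by the elements x̃_J = Σ_{D̃(w) ⊆ J} w, for J ranging over nonempty proper subsets of Δ̃ = Δ ∪ {α_0}, is a left module over Solomon's descent algebra Sol(Φ) under the multiplication of ZW: for any J ⊆ Δ and any nonempty proper K ⊊ Δ̃, the product x_J · x̃_K is an integer linear combination of elements x̃_L. -/

import Mathlib

open scoped RealInnerProductSpace Classical

noncomputable section

variable (V : Type*) [NormedAddCommGroup V] [InnerProductSpace ℝ V] [FiniteDimensional ℝ V]

/-- The orthogonal reflection through the hyperplane orthogonal to `β`. -/
def sRefl (β : V) : V ≃ₗᵢ[ℝ] V := Submodule.reflection ((ℝ ∙ β)ᗮ)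

/-- `β` is a nonnegative linear combination of the elements of `Δ`. -/
def IsNonneg (Δ : Finset V) (β : V) : Prop :=
  ∃ c : V → ℝ, (∀ α, 0 ≤ c α) ∧ β = ∑ α ∈ Δ, c α • α

/-- Root system axioms with simple system `Δ`. -/
structure IsRootSystem (Φ Δ : Finset V) : Prop where
  subset : Δ ⊆ Φ
  nonzero : (0 : V) ∉ Φ
  neg_mem : ∀ β ∈ Φ, -β ∈ Φ
  refl_mem : ∀ α ∈ Φ, ∀ β ∈ Φ, sRefl V α β ∈ Φ
  indep : LinearIndependent ℝ (fun α : Δ => (α : V))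
  pos_or_neg : ∀ β ∈ Φ, IsNonneg V Δ β ∨ IsNonneg V Δ (-β)

/-- The Weyl group: the subgroup generated by the reflections in the roots. -/
def Weyl (Φ : Finset V) : Subgroup (V ≃ₗᵢ[ℝ] V) :=
  Subgroup.closure {g | ∃ β ∈ Φ, g = sRefl V β}

/-- Length with respect to the simple reflections. -/
def len (Δ : Finset V) (w : V ≃ₗᵢ[ℝ] V) : ℕ :=
  sInf {k | ∃ l : List V, l.length = k ∧ (∀ α ∈ l, α ∈ Δ) ∧ (l.map (sRefl V)).prod = w}

/-- Descent set of `w`. -/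
def Dset (Δ : Finset V) (w : V ≃ₗᵢ[ℝ] V) : Finset V :=
  Δ.filter fun α => IsNonneg V Δ (-(w α))

/-- `θ` is the highest root. -/
def IsHighest (Φ Δ : Finset V) (θ : V) : Prop :=
  θ ∈ Φ ∧ IsNonneg V Δ θ ∧ ∀ β ∈ Φ, IsNonneg V Δ β → IsNonneg V Δ (θ - β)

def Crystallographic (Φ : Finset V) : Prop :=
  ∀ α ∈ Φ, ∀ β ∈ Φ, ∃ n : ℤ, 2 * (inner ℝ β α : ℝ) = (n : ℝ) * (inner ℝ α α : ℝ)

def IrreducibleSystem (Δ : Finset V) : Prop :=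
  ∀ s ⊆ Δ, (∀ α ∈ s, ∀ β ∈ Δ, β ∉ s → (inner ℝ α β : ℝ) = 0) → s = ∅ ∨ s = Δ

/-- Affine descent set of `w`, relative to the highest root `θ`. -/
def Dtilde (Δ : Finset V) (θ : V) (w : V ≃ₗᵢ[ℝ] V) : Finset V :=
  (insert (-θ) Δ).filter fun α => IsNonneg V Δ (-(w α))

/-- The descent-algebra basis element `x_J`. -/
def xJ (Φ Δ J : Finset V) : MonoidAlgebra ℤ (Weyl V Φ) :=
  ∑ᶠ w : Weyl V Φ, if Dset V Δ (w : V ≃ₗᵢ[ℝ] V) ⊆ J then MonoidAlgebra.single w 1 else 0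

/-- The affine analogue `x̃_K`. -/
def xT (Φ Δ : Finset V) (θ : V) (K : Finset V) : MonoidAlgebra ℤ (Weyl V Φ) :=
  ∑ᶠ w : Weyl V Φ, if Dtilde V Δ θ (w : V ≃ₗᵢ[ℝ] V) ⊆ K then MonoidAlgebra.single w 1 else 0

def yJ (Φ Δ J : Finset V) : MonoidAlgebra ℤ (Weyl V Φ) :=
  ∑ᶠ w : Weyl V Φ, if Dset V Δ (w : V ≃ₗᵢ[ℝ] V) = J then MonoidAlgebra.single w 1 else 0

def yT (Φ Δ : Finset V) (θ : V) (K : Finset V) : MonoidAlgebra ℤ (Weyl V Φ) :=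
  ∑ᶠ w : Weyl V Φ, if Dtilde V Δ θ (w : V ≃ₗᵢ[ℝ] V) = K then MonoidAlgebra.single w 1 else 0


set_option linter.unusedSectionVars false
set_option linter.unnecessarySimpa false
namespace AffD

variable {V : Type*} [NormedAddCommGroup V] [InnerProductSpace ℝ V] [FiniteDimensional ℝ V]

/-! ### sRefl geometry -/

lemma sRefl_decomp (β x : V) :
    ∃ q ∈ Submodule.span ℝ ({β} : Set V), ∃ p ∈ (Submodule.span ℝ ({β} : Set V))ᗮ,
      x = q + p ∧ sRefl V β x = -q + p := by
  obtain ⟨q, hq, p, hp, hx⟩ := (Submodule.span ℝ ({β} : Set V)).exists_add_mem_mem_orthogonal x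
  refine ⟨q, hq, p, hp, hx, ?_⟩
  have h1 : sRefl V β q = -q := Submodule.reflection_mem_subspace_orthogonal_precomplement_eq_neg hq
  have h2 : sRefl V β p = p := Submodule.reflection_mem_subspace_eq_self hp
  rw [hx, sRefl, map_add]
  rw [sRefl] at h1 h2
  rw [h1, h2]

lemma sRefl_sub_mem (β x : V) : sRefl V β x - x ∈ Submodule.span ℝ ({β} : Set V) := by
  obtain ⟨q, hq, p, hp, hx, hs⟩ := sRefl_decomp β x
  rw [hs, hx]
  have : -q + p - (q + p) = -(2 : ℝ) • q := by
    rw [neg_smul, two_smul]; abel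
  rw [this]
  exact Submodule.smul_mem _ _ hq

lemma sRefl_self (β : V) : sRefl V β β = -β :=
  Submodule.reflection_orthogonalComplement_singleton_eq_neg β

lemma sRefl_mul_self (β : V) : sRefl V β * sRefl V β = 1 := by
  ext x
  have := Submodule.reflection_involutive ((ℝ ∙ β)ᗮ) x
  simpa [sRefl, LinearIsometryEquiv.coe_mul, Function.comp] using this

lemma sRefl_inv (β : V) : (sRefl V β)⁻¹ = sRefl V β := by
  rw [eq_comm, eq_inv_iff_mul_eq_one, sRefl_mul_self]

lemma sRefl_conj (u : V ≃ₗᵢ[ℝ] V) (β : V) :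
    sRefl V (u β) = u * sRefl V β * u⁻¹ := by
  ext x
  obtain ⟨q, hq, p, hp, hx, hs⟩ := sRefl_decomp β (u⁻¹ x)
  have hux : x = u q + u p := by
    rw [← map_add, ← hx]
    show x = u (u⁻¹ x)
    rw [LinearIsometryEquiv.inv_def]
    exact (u.apply_symm_apply x).symm
  have huq : u q ∈ Submodule.span ℝ ({u β} : Set V) := by
    rw [Submodule.mem_span_singleton] at hq ⊢
    obtain ⟨c, rfl⟩ := hq
    exact ⟨c, by rw [map_smul]⟩
  have hup : u p ∈ (Submodule.span ℝ ({u β} : Set V))ᗮ := by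
    intro z hz
    rw [Submodule.mem_span_singleton] at hz
    obtain ⟨c, rfl⟩ := hz
    rw [real_inner_smul_left, LinearIsometryEquiv.inner_map_map]
    have := hp β (Submodule.mem_span_singleton_self β)
    rw [this, mul_zero]
  have h1 : sRefl V (u β) (u q) = -(u q) :=
    Submodule.reflection_mem_subspace_orthogonal_precomplement_eq_neg huq
  have h2 : sRefl V (u β) (u p) = u p := Submodule.reflection_mem_subspace_eq_self hup
  calc sRefl V (u β) x = sRefl V (u β) (u q) + sRefl V (u β) (u p) := by
        rw [hux, map_add]
    _ = -(u q) + u p := by rw [h1, h2]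
    _ = u (sRefl V β (u⁻¹ x)) := by rw [hs, map_add, map_neg]
    _ = (u * sRefl V β * u⁻¹) x := rfl

lemma sRefl_smul {c : ℝ} (hc : c ≠ 0) (β : V) : sRefl V (c • β) = sRefl V β := by
  unfold sRefl
  congr 1
  rw [Submodule.span_singleton_smul_eq (IsUnit.mk0 c hc)]

end AffD
set_option linter.unusedSectionVars false
namespace AffD

variable {V : Type*} [NormedAddCommGroup V] [InnerProductSpace ℝ V] [FiniteDimensional ℝ V]
variable {Φ Δ : Finset V}

/-! ### IsNonneg basics -/

lemma isNonneg_add {x y : V} (hx : IsNonneg V Δ x) (hy : IsNonneg V Δ y) :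
    IsNonneg V Δ (x + y) := by
  obtain ⟨c, hc, rfl⟩ := hx
  obtain ⟨d, hd, rfl⟩ := hy
  exact ⟨c + d, fun α => add_nonneg (hc α) (hd α), by
    rw [← Finset.sum_add_distrib]
    exact Finset.sum_congr rfl fun α _ => by simp [add_smul]⟩

lemma isNonneg_smul {t : ℝ} {x : V} (ht : 0 ≤ t) (hx : IsNonneg V Δ x) :
    IsNonneg V Δ (t • x) := by
  obtain ⟨c, hc, rfl⟩ := hx
  exact ⟨fun α => t * c α, fun α => mul_nonneg ht (hc α), by
    rw [Finset.smul_sum]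
    exact Finset.sum_congr rfl fun α _ => by rw [smul_smul]⟩

lemma isNonneg_zero : IsNonneg V Δ (0 : V) :=
  ⟨0, fun _ => le_refl _, by simp⟩

lemma isNonneg_mem {α : V} (hα : α ∈ Δ) : IsNonneg V Δ α := by
  refine ⟨fun x => if x = α then 1 else 0, fun x => by positivity, ?_⟩
  rw [Finset.sum_congr rfl (fun x _ => ?_), Finset.sum_ite_eq' Δ α (fun x => x)]
  · simp [hα]
  · rw [ite_smul, one_smul, zero_smul]

lemma isNonneg_sum {ι : Type*} {s : Finset ι} {c : ι → ℝ} {f : ι → V}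
    (hc : ∀ i ∈ s, 0 ≤ c i) (hf : ∀ i ∈ s, IsNonneg V Δ (f i)) :
    IsNonneg V Δ (∑ i ∈ s, c i • f i) := by
  classical
  induction s using Finset.induction_on with
  | empty => simpa using isNonneg_zero
  | insert a s' hnotmem ih =>
    rw [Finset.sum_insert hnotmem]
    exact isNonneg_add
      (isNonneg_smul (hc a (Finset.mem_insert_self a s'))
        (hf a (Finset.mem_insert_self a s')))
      (ih (fun i hi => hc i (Finset.mem_insert_of_mem hi))
        (fun i hi => hf i (Finset.mem_insert_of_mem hi)))

/-! ### coordinates and dichotomy -/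

lemma coords_zero (h : IsRootSystem V Φ Δ) {c : V → ℝ}
    (hc : ∑ α ∈ Δ, c α • α = 0) : ∀ α ∈ Δ, c α = 0 := by
  have hind := linearIndependent_iff'.mp h.indep Finset.univ (fun i => c ↑i)
  have hsum : ∑ i : {x // x ∈ Δ}, c ↑i • (↑i : V) = 0 := by
    rw [Finset.sum_coe_sort Δ (fun a => c a • a)]; exact hc
  intro α hα
  exact hind hsum ⟨α, hα⟩ (Finset.mem_univ _)

lemma coords_eq (h : IsRootSystem V Φ Δ) {c d : V → ℝ}
    (hcd : ∑ α ∈ Δ, c α • α = ∑ α ∈ Δ, d α • α) : ∀ α ∈ Δ, c α = d α := by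
  intro α hα
  have := coords_zero h (c := c - d) (by
    simp only [Pi.sub_apply, sub_smul, Finset.sum_sub_distrib, hcd, sub_self]) α hα
  simpa [sub_eq_zero] using this

lemma not_both (h : IsRootSystem V Φ Δ) {β : V} (hβ : β ∈ Φ)
    (h1 : IsNonneg V Δ β) (h2 : IsNonneg V Δ (-β)) : False := by
  obtain ⟨c, hc, hc'⟩ := h1
  obtain ⟨d, hd, hd'⟩ := h2
  have hsum : ∑ α ∈ Δ, (c + d) α • α = 0 := by
    have : β + (-β) = 0 := by abel
    rw [← this]
    nth_rewrite 1 [hc']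
    nth_rewrite 1 [hd']
    rw [← Finset.sum_add_distrib]
    exact Finset.sum_congr rfl fun α _ => by simp [add_smul]
  have hz := coords_zero h hsum
  have hβ0 : β = 0 := by
    rw [hc']
    refine Finset.sum_eq_zero fun α hα => ?_
    have : c α = 0 := by
      have := hz α hα
      simp only [Pi.add_apply] at this
      linarith [hc α, hd α]
    rw [this, zero_smul]
  exact h.nonzero (hβ0 ▸ hβ)

lemma dich (h : IsRootSystem V Φ Δ) {β : V} (hβ : β ∈ Φ) :
    IsNonneg V Δ (-β) ↔ ¬ IsNonneg V Δ β := by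
  constructor
  · intro h2 h1; exact not_both h hβ h1 h2
  · intro h1
    rcases h.pos_or_neg β hβ with h' | h'
    · exact absurd h' h1
    · exact h'

/-! ### Weyl group basics -/

lemma sRefl_mem_weyl {β : V} (hβ : β ∈ Φ) : sRefl V β ∈ Weyl V Φ :=
  Subgroup.subset_closure ⟨β, hβ, rfl⟩

lemma weyl_maps_root {g : V ≃ₗᵢ[ℝ] V} (h : IsRootSystem V Φ Δ) (hg : g ∈ Weyl V Φ) :
    ∀ β ∈ Φ, g β ∈ Φ := by
  have main : ∀ g ∈ Weyl V Φ, (∀ β ∈ Φ, g β ∈ Φ) ∧ (∀ β ∈ Φ, g⁻¹ β ∈ Φ) := by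
    intro g hg
    induction hg using Subgroup.closure_induction with
    | mem x hx =>
      obtain ⟨γ, hγ, rfl⟩ := hx
      constructor
      · exact fun β hβ => h.refl_mem γ hγ β hβ
      · rw [sRefl_inv]
        exact fun β hβ => h.refl_mem γ hγ β hβ
    | one => simp
    | mul x y _ _ hx hy =>
      refine ⟨fun β hβ => ?_, fun β hβ => ?_⟩
      · show x (y β) ∈ Φ
        exact hx.1 _ (hy.1 _ hβ)
      · rw [mul_inv_rev]
        show y⁻¹ (x⁻¹ β) ∈ Φ
        exact hy.2 _ (hx.2 _ hβ)
    | inv x _ hx =>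
      refine ⟨hx.2, ?_⟩
      rw [inv_inv]
      exact hx.1
  exact (main g hg).1

/-- The parabolic subgroup generated by reflections in `I`. -/
def WI (I : Finset V) : Subgroup (V ≃ₗᵢ[ℝ] V) :=
  Subgroup.closure {g | ∃ α ∈ I, g = sRefl V α}

lemma WI_le_weyl {I : Finset V} (h : IsRootSystem V Φ Δ) (hI : I ⊆ Δ) :
    WI (V := V) I ≤ Weyl V Φ := by
  rw [WI, Subgroup.closure_le]
  rintro g ⟨α, hα, rfl⟩
  exact sRefl_mem_weyl (h.subset (hI hα))

lemma WI_sub_mem {I : Finset V} {g : V ≃ₗᵢ[ℝ] V} (hg : g ∈ WI (V := V) I) :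
    ∀ x : V, g x - x ∈ Submodule.span ℝ (I : Set V) := by
  induction hg using Subgroup.closure_induction with
  | mem x hx =>
    obtain ⟨α, hα, rfl⟩ := hx
    intro y
    exact Submodule.span_mono (by simpa using hα) (sRefl_sub_mem α y)
  | one => intro x; simp
  | mul a b _ _ ha hb =>
    intro x
    have : (a * b) x - x = (a (b x) - b x) + (b x - x) := by
      show a (b x) - x = _; abel
    rw [this]
    exact Submodule.add_mem _ (ha (b x)) (hb x)
  | inv a _ ha =>
    intro x
    have : a⁻¹ x - x = -(a (a⁻¹ x) - a⁻¹ x) := by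
      have : a (a⁻¹ x) = x := by
        rw [LinearIsometryEquiv.inv_def]; exact a.apply_symm_apply x
      rw [this]; abel
    rw [this]
    exact Submodule.neg_mem _ (ha (a⁻¹ x))

lemma WI_maps_span {I : Finset V} {g : V ≃ₗᵢ[ℝ] V} (hg : g ∈ WI (V := V) I)
    {x : V} (hx : x ∈ Submodule.span ℝ (I : Set V)) :
    g x ∈ Submodule.span ℝ (I : Set V) := by
  have := WI_sub_mem hg x
  have h2 : g x = (g x - x) + x := by abel
  rw [h2]
  exact Submodule.add_mem _ this hx

end AffD
set_option linter.unusedSectionVars false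
namespace AffD

variable {V : Type*} [NormedAddCommGroup V] [InnerProductSpace ℝ V] [FiniteDimensional ℝ V]
variable {Φ Δ : Finset V}

/-! ### restricting nonneg combinations to sub-systems -/

lemma sum_extend {I : Finset V} (hI : I ⊆ Δ) (f : V → ℝ) :
    ∑ α ∈ I, f α • α = ∑ α ∈ Δ, (if α ∈ I then f α else 0) • α := by
  have hv : ∀ x ∈ Δ, x ∉ I → (if x ∈ I then f x else 0) • x = 0 :=
    fun x _ hnx => by rw [if_neg hnx, zero_smul]
  rw [← Finset.sum_subset hI hv]
  exact Finset.sum_congr rfl fun α hα => by rw [if_pos hα]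

lemma isNonneg_restrict (h : IsRootSystem V Φ Δ) {I : Finset V} (hI : I ⊆ Δ) {β : V}
    (hsp : β ∈ Submodule.span ℝ (I : Set V)) (hpos : IsNonneg V Δ β) :
    ∃ c : V → ℝ, (∀ α, 0 ≤ c α) ∧ β = ∑ α ∈ I, c α • α := by
  obtain ⟨c, hc, hc'⟩ := hpos
  obtain ⟨f, -, hf⟩ := Submodule.mem_span_finset.mp hsp
  have he : ∑ α ∈ Δ, c α • α = ∑ α ∈ Δ, (if α ∈ I then f α else 0) • α := by
    rw [← sum_extend hI, hf, ← hc']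
  have := coords_eq h he
  refine ⟨c, hc, ?_⟩
  rw [hc', Finset.sum_subset hI (fun x hx hnx => ?_)]
  have := this x hx
  simp only [hnx, if_false] at this
  rw [this, zero_smul]

lemma isNonnegI_isNonneg {I : Finset V} (hI : I ⊆ Δ) {β : V}
    {c : V → ℝ} (hc : ∀ α, 0 ≤ c α) (hβ : β = ∑ α ∈ I, c α • α) :
    IsNonneg V Δ β := by
  refine ⟨fun α => if α ∈ I then c α else 0, fun α => ?_, ?_⟩
  · by_cases hmem : α ∈ I
    · simpa [hmem] using hc α
    · simp [hmem]
  · rw [hβ, sum_extend hI]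

lemma mem_spanI_of_combo {I : Finset V} {β : V} {c : V → ℝ}
    (hβ : β = ∑ α ∈ I, c α • α) : β ∈ Submodule.span ℝ (I : Set V) := by
  rw [hβ]
  exact Submodule.sum_mem _ fun α hα =>
    Submodule.smul_mem _ _ (Submodule.subset_span (by simpa using hα))

/-! ### sign preservation for roots outside span I -/

lemma span_sign_out (h : IsRootSystem V Φ Δ) {I : Finset V} (hI : I ⊆ Δ)
    {g : V ≃ₗᵢ[ℝ] V} (hg : g ∈ WI (V := V) I) {β : V} (hβ : β ∈ Φ)
    (hout : β ∉ Submodule.span ℝ (I : Set V)) (hpos : IsNonneg V Δ β) :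
    IsNonneg V Δ (g β) := by
  have hgβ : g β ∈ Φ := weyl_maps_root h (WI_le_weyl h hI hg) β hβ
  by_contra hneg
  rw [← dich h hgβ] at hneg
  obtain ⟨c, hc, hc'⟩ := hpos
  obtain ⟨d, hd, hd'⟩ := hneg
  obtain ⟨f, -, hf⟩ := Submodule.mem_span_finset.mp (WI_sub_mem hg β)
  have hzero : ∑ α ∈ Δ, (fun α => c α + d α + (if α ∈ I then f α else 0)) α • α = 0 := by
    have : β + (-(g β)) + (g β - β) = 0 := by abel
    rw [← this]
    nth_rewrite 1 [hc']
    nth_rewrite 1 [hd']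
    rw [← hf, sum_extend hI f, ← Finset.sum_add_distrib, ← Finset.sum_add_distrib]
    exact Finset.sum_congr rfl fun α _ => by simp [add_smul]
  have hz := coords_zero h hzero
  apply hout
  apply mem_spanI_of_combo (c := c)
  rw [hc', Finset.sum_subset hI (fun x hx hnx => ?_)]
  have := hz x hx
  simp only [hnx, if_false, add_zero] at this
  have : c x = 0 := by linarith [hc x, hd x]
  rw [this, zero_smul]

/-! ### the key simple reflection lemma (F1) -/

lemma simple_refl_pos (h : IsRootSystem V Φ Δ) {α β : V} (hα : α ∈ Δ) (hβ : β ∈ Φ)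
    (hpos : IsNonneg V Δ β) (hnp : β ∉ Submodule.span ℝ ({α} : Set V)) :
    IsNonneg V Δ (sRefl V α β) := by
  have hsβ : sRefl V α β ∈ Φ := h.refl_mem α (h.subset hα) β hβ
  by_contra hneg
  rw [← dich h hsβ] at hneg
  obtain ⟨c, hc, hc'⟩ := hpos
  obtain ⟨d, hd, hd'⟩ := hneg
  obtain ⟨r, hr⟩ := Submodule.mem_span_singleton.mp (sRefl_sub_mem α β)
  have hzero : ∑ γ ∈ Δ, (fun γ => c γ + d γ + (if γ = α then r else 0)) γ • γ = 0 := by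
    have : β + (-(sRefl V α β)) + (sRefl V α β - β) = 0 := by abel
    rw [← this]
    nth_rewrite 1 [hc']
    nth_rewrite 1 [hd']
    rw [← hr]
    have hrα : r • α = ∑ γ ∈ Δ, (if γ = α then r else 0) • γ := by
      rw [Finset.sum_congr rfl (fun x _ => ?_), Finset.sum_ite_eq' Δ α (fun x => r • x)]
      · simp [hα]
      · rw [ite_smul, zero_smul]
    rw [hrα, ← Finset.sum_add_distrib, ← Finset.sum_add_distrib]
    exact Finset.sum_congr rfl fun γ _ => by simp [add_smul]
  have hz := coords_zero h hzero
  apply hnp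
  have hβeq : β = c α • α := by
    rw [hc']
    rw [Finset.sum_eq_single_of_mem α hα (fun γ hγ hne => ?_)]
    have := hz γ hγ
    simp only [hne, if_false, add_zero] at this
    have : c γ = 0 := by linarith [hc γ, hd γ]
    rw [this, zero_smul]
  rw [hβeq]
  exact Submodule.smul_mem _ _ (Submodule.mem_span_singleton_self α)

/-! ### I-positive elements -/

def IPos (Δ I : Finset V) (u : V ≃ₗᵢ[ℝ] V) : Prop := ∀ α ∈ I, IsNonneg V Δ (u α)

lemma ipos_posI (h : IsRootSystem V Φ Δ) {I : Finset V} (hI : I ⊆ Δ)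
    {u : V ≃ₗᵢ[ℝ] V} (hu : IPos Δ I u) {β : V}
    (hsp : β ∈ Submodule.span ℝ (I : Set V)) (hpos : IsNonneg V Δ β) :
    IsNonneg V Δ (u β) := by
  obtain ⟨c, hc, hc'⟩ := isNonneg_restrict h hI hsp hpos
  have : u β = ∑ α ∈ I, c α • u α := by
    rw [hc', map_sum]
    exact Finset.sum_congr rfl fun α _ => by rw [map_smul]
  rw [this]
  exact isNonneg_sum (fun i _ => hc i) (fun i hi => hu i hi)

lemma ipos_sign_iff (h : IsRootSystem V Φ Δ) {I : Finset V} (hI : I ⊆ Δ)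
    {u : V ≃ₗᵢ[ℝ] V} (huW : u ∈ Weyl V Φ) (hu : IPos Δ I u) {β : V} (hβ : β ∈ Φ)
    (hsp : β ∈ Submodule.span ℝ (I : Set V)) :
    IsNonneg V Δ (u β) ↔ IsNonneg V Δ β := by
  constructor
  · intro h1
    by_contra h2
    rw [← dich h hβ] at h2
    have : IsNonneg V Δ (u (-β)) :=
      ipos_posI h hI hu (Submodule.neg_mem _ hsp) h2
    rw [map_neg] at this
    exact not_both h (weyl_maps_root h huW β hβ) h1 this
  · exact ipos_posI h hI hu hsp

lemma span_sign_out_iff (h : IsRootSystem V Φ Δ) {I : Finset V} (hI : I ⊆ Δ)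
    {g : V ≃ₗᵢ[ℝ] V} (hg : g ∈ WI (V := V) I) {β : V} (hβ : β ∈ Φ)
    (hout : β ∉ Submodule.span ℝ (I : Set V)) :
    IsNonneg V Δ (g β) ↔ IsNonneg V Δ β := by
  constructor
  · intro h1
    have hgβ : g β ∈ Φ := weyl_maps_root h (WI_le_weyl h hI hg) β hβ
    have hgout : g β ∉ Submodule.span ℝ (I : Set V) := by
      intro hmem
      apply hout
      have := WI_maps_span (Subgroup.inv_mem _ hg) hmem
      rwa [LinearIsometryEquiv.inv_def, LinearIsometryEquiv.symm_apply_apply] at this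
    have := span_sign_out h hI (Subgroup.inv_mem _ hg) hgβ hgout h1
    rwa [LinearIsometryEquiv.inv_def, LinearIsometryEquiv.symm_apply_apply] at this
  · exact span_sign_out h hI hg hβ hout

end AffD
set_option linter.unusedSectionVars false
namespace AffD

variable {V : Type*} [NormedAddCommGroup V] [InnerProductSpace ℝ V] [FiniteDimensional ℝ V]
variable {Φ Δ : Finset V}

lemma mul_apply (e f : V ≃ₗᵢ[ℝ] V) (x : V) : (e * f) x = e (f x) := rfl

lemma one_apply (x : V) : (1 : V ≃ₗᵢ[ℝ] V) x = x := rfl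

lemma listprod_mem_WI {I : Finset V} {l : List V} (hl : ∀ α ∈ l, α ∈ I) :
    (l.map (sRefl V)).prod ∈ WI (V := V) I := by
  apply Subgroup.list_prod_mem
  intro x hx
  rw [List.mem_map] at hx
  obtain ⟨α, hα, rfl⟩ := hx
  exact Subgroup.subset_closure ⟨α, hl α hα, rfl⟩

/-- scanning lemma: a product of simple reflections turning a positive root negative
has a step where the sign flip occurs. -/
lemma scan_lemma {m : List V} {y : V}
    (hy : IsNonneg V Δ y) (hneg : ¬ IsNonneg V Δ ((m.map (sRefl V)).prod y)) :
    ∃ m₁ γ m₂, m = m₁ ++ γ :: m₂ ∧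
      IsNonneg V Δ ((m₂.map (sRefl V)).prod y) ∧
      ¬ IsNonneg V Δ (sRefl V γ ((m₂.map (sRefl V)).prod y)) := by
  induction m with
  | nil => simp only [List.map_nil, List.prod_nil, one_apply] at hneg; exact absurd hy hneg
  | cons γ m' ih =>
    by_cases hp : IsNonneg V Δ ((m'.map (sRefl V)).prod y)
    · refine ⟨[], γ, m', by simp, hp, ?_⟩
      intro hcon
      apply hneg
      simpa [mul_apply] using hcon
    · obtain ⟨m₁, γ', m₂, heq, h1, h2⟩ := ih hp
      exact ⟨γ :: m₁, γ', m₂, by rw [heq]; rfl, h1, h2⟩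

/-- Deletion-type argument: a word in simple reflections of `I` whose product
preserves all nonnegative roots of the subsystem is the identity. -/
lemma word_eq_one (h : IsRootSystem V Φ Δ) {I : Finset V} (hI : I ⊆ Δ) :
    ∀ (k : ℕ) (l : List V), l.length ≤ k → (∀ α ∈ l, α ∈ I) →
      (∀ β ∈ Φ, β ∈ Submodule.span ℝ (I : Set V) → IsNonneg V Δ β →
        IsNonneg V Δ ((l.map (sRefl V)).prod β)) →
      (l.map (sRefl V)).prod = 1 := by
  intro k
  induction k with
  | zero =>
    intro l hlen _ _
    rw [List.length_eq_zero_iff.mp (Nat.le_zero.mp hlen)]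
    simp
  | succ k ih =>
    intro l hlen hlI hpres
    rcases List.eq_nil_or_concat l with rfl | ⟨init, αk, rfl⟩
    · simp
    rw [List.concat_eq_append] at *
    have hαkI : αk ∈ I := hlI αk (by simp)
    have hαkΔ : αk ∈ Δ := hI hαkI
    have hαkΦ : αk ∈ Φ := h.subset hαkΔ
    have hαksp : (αk : V) ∈ Submodule.span ℝ (I : Set V) :=
      Submodule.subset_span (by simpa using hαkI)
    have hinitI : ∀ α ∈ init, α ∈ I := fun α hα => hlI α (by simp [hα])
    have hinitW : (init.map (sRefl V)).prod ∈ Weyl V Φ :=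
      WI_le_weyl h hI (listprod_mem_WI hinitI)
    have hprodsplit : (((init ++ [αk]).map (sRefl V)).prod)
        = (init.map (sRefl V)).prod * sRefl V αk := by
      rw [List.map_append, List.prod_append]; simp
    -- the product sends αk to a nonneg root, so init sends αk to a negative root
    have h1 : IsNonneg V Δ ((((init ++ [αk]).map (sRefl V)).prod) αk) :=
      hpres αk hαkΦ hαksp (isNonneg_mem hαkΔ)
    have h2 : ¬ IsNonneg V Δ ((init.map (sRefl V)).prod αk) := by
      intro hcon
      rw [hprodsplit, mul_apply, sRefl_self, map_neg] at h1
      exact not_both h (weyl_maps_root h hinitW αk hαkΦ) hcon h1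
    -- scan for the flip
    obtain ⟨m₁, γ, m₂, heq, hδpos, hδflip⟩ := scan_lemma (isNonneg_mem hαkΔ) h2
    set δ := (m₂.map (sRefl V)).prod αk with hδdef
    have hm₂I : ∀ α ∈ m₂, α ∈ I := fun α hα => hinitI α (by simp [heq, hα])
    have hm₁I : ∀ α ∈ m₁, α ∈ I := fun α hα => hinitI α (by simp [heq, hα])
    have hγI : γ ∈ I := hinitI γ (by simp [heq])
    have hm₂WI : (m₂.map (sRefl V)).prod ∈ WI (V := V) I := listprod_mem_WI hm₂I
    have hδΦ : δ ∈ Φ := weyl_maps_root h (WI_le_weyl h hI hm₂WI) αk hαkΦ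
    have hδsp : δ ∈ Submodule.span ℝ (I : Set V) := WI_maps_span hm₂WI hαksp
    -- δ must be parallel to γ
    have hδγ : δ ∈ Submodule.span ℝ ({γ} : Set V) := by
      by_contra hnp
      exact hδflip (simple_refl_pos h (hI hγI) hδΦ hδpos hnp)
    obtain ⟨r, hr⟩ := Submodule.mem_span_singleton.mp hδγ
    have hrne : r ≠ 0 := by
      intro h0
      rw [h0, zero_smul] at hr
      exact h.nonzero (hr ▸ hδΦ)
    -- reflection surgery
    have hconj : sRefl V γ = (m₂.map (sRefl V)).prod * sRefl V αk *
        ((m₂.map (sRefl V)).prod)⁻¹ := by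
      rw [← sRefl_conj ((m₂.map (sRefl V)).prod) αk, ← hδdef, ← hr, sRefl_smul hrne]
    have hkey : sRefl V γ * (m₂.map (sRefl V)).prod
        = (m₂.map (sRefl V)).prod * sRefl V αk := by
      rw [hconj, mul_assoc, inv_mul_cancel, mul_one]
    -- the shortened word
    have hprodeq : ((init ++ [αk]).map (sRefl V)).prod
        = ((m₁ ++ m₂).map (sRefl V)).prod := by
      rw [hprodsplit, heq]
      rw [List.map_append, List.prod_append, List.map_cons, List.prod_cons]
      rw [List.map_append, List.prod_append]
      rw [mul_assoc, mul_assoc, ← hkey, ← mul_assoc (sRefl V γ), sRefl_mul_self, one_mul]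
    rw [hprodeq]
    apply ih (m₁ ++ m₂) ?_ (fun α hα => by
      rcases List.mem_append.mp hα with h' | h'
      · exact hm₁I α h'
      · exact hm₂I α h') (fun β hβ hsp hpos => by
        rw [← hprodeq]; exact hpres β hβ hsp hpos)
    -- length bound
    have hlen2 : (init ++ [αk]).length = m₁.length + m₂.length + 2 := by
      simp [heq]; omega
    have : (init ++ [αk]).length ≤ k + 1 := hlen
    simp only [List.length_append] at *
    omega

/-- extraction of a word representation from membership in `WI`. -/
lemma WI_word {I : Finset V} {g : V ≃ₗᵢ[ℝ] V} (hg : g ∈ WI (V := V) I) :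
    ∃ l : List V, (∀ α ∈ l, α ∈ I) ∧ (l.map (sRefl V)).prod = g := by
  have hsub : g ∈ Submonoid.closure ({g | ∃ α ∈ I, g = sRefl V α} ∪
      {g | ∃ α ∈ I, g = sRefl V α}⁻¹) := by
    rw [← Subgroup.closure_toSubmonoid]
    exact hg
  obtain ⟨l, hl, rfl⟩ := Submonoid.exists_list_of_mem_closure hsub
  -- convert the list of group elements to a list of roots
  have hconv : ∀ x ∈ l, ∃ α ∈ I, x = sRefl V α := by
    intro x hx
    rcases hl x hx with h' | h'
    · exact h'
    · obtain ⟨α, hα, hEq⟩ := h'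
      refine ⟨α, hα, ?_⟩
      have h2 : x⁻¹ = sRefl V α := hEq
      calc x = (x⁻¹)⁻¹ := (inv_inv x).symm
        _ = (sRefl V α)⁻¹ := by rw [h2]
        _ = sRefl V α := sRefl_inv α
  clear hl hsub hg
  induction l with
  | nil => exact ⟨[], by simp, by simp⟩
  | cons x l' ih =>
    obtain ⟨α, hα, rfl⟩ := hconv x (by simp)
    obtain ⟨l'', hl''I, hl''⟩ := ih (fun y hy => hconv y (by simp [hy]))
    refine ⟨α :: l'', ?_, by simp [hl'']⟩
    intro a ha
    rcases List.mem_cons.mp ha with rfl | ha'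
    · exact hα
    · exact hl''I a ha'

end AffD
set_option linter.unusedSectionVars false
namespace AffD

variable {V : Type*} [NormedAddCommGroup V] [InnerProductSpace ℝ V] [FiniteDimensional ℝ V]
variable {Φ Δ : Finset V}

/-- C2: an element of `WI` preserving all positive roots of the subsystem is `1`. -/
lemma WI_eq_one (h : IsRootSystem V Φ Δ) {I : Finset V} (hI : I ⊆ Δ)
    {g : V ≃ₗᵢ[ℝ] V} (hg : g ∈ WI (V := V) I)
    (hpres : ∀ β ∈ Φ, β ∈ Submodule.span ℝ (I : Set V) → IsNonneg V Δ β →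
      IsNonneg V Δ (g β)) : g = 1 := by
  obtain ⟨l, hlI, hlprod⟩ := WI_word hg
  rw [← hlprod]
  exact word_eq_one h hI l.length l (le_refl _) hlI (by rw [hlprod]; exact hpres)

/-- uniqueness of the I-positive representative. -/
lemma ipos_unique (h : IsRootSystem V Φ Δ) {I : Finset V} (hI : I ⊆ Δ)
    {u g : V ≃ₗᵢ[ℝ] V} (hu : u ∈ Weyl V Φ) (hg : g ∈ WI (V := V) I)
    (h1 : IPos Δ I u) (h2 : IPos Δ I (u * g)) : g = 1 := by
  apply WI_eq_one h hI hg
  intro β hβ hsp hpos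
  by_contra hcon
  have hgW : g ∈ Weyl V Φ := WI_le_weyl h hI hg
  have hgβΦ : g β ∈ Φ := weyl_maps_root h hgW β hβ
  have hgβsp : g β ∈ Submodule.span ℝ (I : Set V) := WI_maps_span hg hsp
  rw [← dich h hgβΦ] at hcon
  have hneg : IsNonneg V Δ (u (-(g β))) :=
    ipos_posI h hI h1 (Submodule.neg_mem _ hgβsp) hcon
  rw [map_neg] at hneg
  have hposu : IsNonneg V Δ (u (g β)) := by
    have := ipos_posI h hI h2 hsp hpos
    rwa [mul_apply] at this
  exact not_both h (weyl_maps_root h hu _ hgβΦ) hposu hneg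

/-- existence of the I-positive representative in a right coset `u · WI`. -/
lemma ipos_exists (h : IsRootSystem V Φ Δ) {I : Finset V} (hI : I ⊆ Δ)
    {u : V ≃ₗᵢ[ℝ] V} (hu : u ∈ Weyl V Φ) :
    ∃ g ∈ WI (V := V) I, IPos Δ I (u * g) := by
  suffices H : ∀ (n : ℕ) (u : V ≃ₗᵢ[ℝ] V), u ∈ Weyl V Φ →
      (Φ.filter (fun β => β ∈ Submodule.span ℝ (I : Set V) ∧ IsNonneg V Δ β ∧
        IsNonneg V Δ (-(u β)))).card ≤ n →
      ∃ g ∈ WI (V := V) I, IPos Δ I (u * g) by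
    exact H _ u hu (le_refl _)
  intro n
  induction n with
  | zero =>
    intro u huW hcard
    refine ⟨1, one_mem _, ?_⟩
    intro α hα
    rw [mul_one]
    have hαΦ : α ∈ Φ := h.subset (hI hα)
    have huα : u α ∈ Φ := weyl_maps_root h huW α hαΦ
    by_contra hneg
    rw [← dich h huα] at hneg
    have : α ∈ Φ.filter (fun β => β ∈ Submodule.span ℝ (I : Set V) ∧ IsNonneg V Δ β ∧
        IsNonneg V Δ (-(u β))) := by
      rw [Finset.mem_filter]
      exact ⟨hαΦ, Submodule.subset_span (by simpa using hα), isNonneg_mem (hI hα), hneg⟩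
    have := Finset.card_pos.mpr ⟨α, this⟩
    omega
  | succ n ih =>
    intro u huW hcard
    by_cases hall : ∀ α ∈ I, IsNonneg V Δ (u α)
    · exact ⟨1, one_mem _, by rwa [mul_one]⟩
    push_neg at hall
    obtain ⟨α, hαI, hαneg⟩ := hall
    have hαΔ : α ∈ Δ := hI hαI
    have hαΦ : α ∈ Φ := h.subset hαΔ
    have huα : u α ∈ Φ := weyl_maps_root h huW α hαΦ
    rw [← dich h huα] at hαneg
    -- pass to u * sRefl α と show the bad set strictly decreases
    set Bad : (V ≃ₗᵢ[ℝ] V) → Finset V := fun w =>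
      Φ.filter (fun β => β ∈ Submodule.span ℝ (I : Set V) ∧ IsNonneg V Δ β ∧
        IsNonneg V Δ (-(w β))) with hBad
    have hsmem : sRefl V α ∈ WI (V := V) I := Subgroup.subset_closure ⟨α, hαI, rfl⟩
    have husW : u * sRefl V α ∈ Weyl V Φ := mul_mem huW (WI_le_weyl h hI hsmem)
    have himg : (Bad (u * sRefl V α)).image (sRefl V α) ⊆ Bad u := by
      intro x hx
      rw [Finset.mem_image] at hx
      obtain ⟨β, hβmem, rfl⟩ := hx
      rw [hBad, Finset.mem_filter] at hβmem ⊢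
      obtain ⟨hβΦ, hβsp, hβpos, hβflip⟩ := hβmem
      rw [mul_apply] at hβflip
      have hsβΦ : sRefl V α β ∈ Φ := h.refl_mem α hαΦ β hβΦ
      have hsβsp : sRefl V α β ∈ Submodule.span ℝ (I : Set V) := by
        have h2 : sRefl V α β = β + (sRefl V α β - β) := by abel
        rw [h2]
        exact Submodule.add_mem _ hβsp
          (Submodule.span_mono (by simpa using hαI) (sRefl_sub_mem α β))
      -- β is not parallel to α
      have hnp : β ∉ Submodule.span ℝ ({α} : Set V) := by
        intro hmem
        obtain ⟨c, hc⟩ := Submodule.mem_span_singleton.mp hmem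
        have hcne : c ≠ 0 := by
          intro h0; rw [h0, zero_smul] at hc; exact h.nonzero (hc ▸ hβΦ)
        have hcpos : 0 < c := by
          rcases lt_or_gt_of_ne hcne with hlt | hgt
          · exfalso
            apply not_both h hβΦ hβpos
            rw [← hc, ← neg_smul]
            exact isNonneg_smul (by linarith) (isNonneg_mem hαΔ)
          · exact hgt
        -- then u (sRefl α β) = -c • u α and the flip condition contradicts hαneg
        apply not_both h (h.neg_mem _ (weyl_maps_root h husW β hβΦ))
        · show IsNonneg V Δ (-((u * sRefl V α) β))
          exact hβflip
        · have hval : (u * sRefl V α) β = c • (-(u α)) := by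
            rw [mul_apply, ← hc, (sRefl V α).map_smul, sRefl_self]
            simp
          rw [neg_neg, hval]
          exact isNonneg_smul (le_of_lt hcpos) hαneg
      exact ⟨hsβΦ, hsβsp, simple_refl_pos h hαΔ hβΦ hβpos hnp, hβflip⟩
    have hαBad : α ∈ Bad u := by
      rw [hBad, Finset.mem_filter]
      exact ⟨hαΦ, Submodule.subset_span (by simpa using hαI), isNonneg_mem hαΔ, hαneg⟩
    have hαnotimg : α ∉ (Bad (u * sRefl V α)).image (sRefl V α) := by
      intro hmem
      rw [Finset.mem_image] at hmem
      obtain ⟨β, hβmem, hβeq⟩ := hmem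
      have hβval : β = -α := by
        have h2 : sRefl V α (sRefl V α β) = sRefl V α α := by rw [hβeq]
        have hinv : sRefl V α (sRefl V α β) = β := by
          calc sRefl V α (sRefl V α β) = (sRefl V α * sRefl V α) β := rfl
            _ = β := by rw [sRefl_mul_self]; rfl
        rw [hinv, sRefl_self] at h2
        exact h2
      rw [hBad, Finset.mem_filter] at hβmem
      obtain ⟨hβΦ, _, hβpos, _⟩ := hβmem
      apply not_both h hβΦ hβpos
      rw [hβval, neg_neg]
      exact isNonneg_mem hαΔ
    have hlt : (Bad (u * sRefl V α)).card < (Bad u).card := by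
      have hcardeq : (Bad (u * sRefl V α)).card
          = ((Bad (u * sRefl V α)).image (sRefl V α)).card := by
        rw [Finset.card_image_of_injective _ (sRefl V α).injective]
      rw [hcardeq]
      apply Finset.card_lt_card
      rw [Finset.ssubset_iff_of_subset himg]
      exact ⟨α, hαBad, hαnotimg⟩
    have hle : (Bad u).card ≤ n + 1 := hcard
    have h1 : (Bad (u * sRefl V α)).card ≤ n := by omega
    obtain ⟨g, hgWI, hgIP⟩ := ih (u * sRefl V α) husW h1
    refine ⟨sRefl V α * g, mul_mem hsmem hgWI, ?_⟩
    rwa [← mul_assoc]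

end AffD
set_option linter.unusedSectionVars false
namespace AffD

variable {V : Type*} [NormedAddCommGroup V] [InnerProductSpace ℝ V] [FiniteDimensional ℝ V]
variable {Φ Δ : Finset V} {θ : V}

lemma root_of_tilde (h : IsRootSystem V Φ Δ) (hθ : IsHighest V Φ Δ θ)
    {γ : V} (hγ : γ ∈ insert (-θ) Δ) : γ ∈ Φ := by
  rcases Finset.mem_insert.mp hγ with rfl | hγΔ
  · exact h.neg_mem θ hθ.1
  · exact h.subset hγΔ

lemma Dtilde_subset_iff {w : V ≃ₗᵢ[ℝ] V} {K : Finset V} :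
    Dtilde V Δ θ w ⊆ K ↔
      ∀ γ ∈ insert (-θ) Δ, γ ∉ K → ¬ IsNonneg V Δ (-(w γ)) := by
  constructor
  · intro hs γ hγ hγK hcon
    exact hγK (hs (Finset.mem_filter.mpr ⟨hγ, hcon⟩))
  · intro hall γ hγ
    rw [Dtilde, Finset.mem_filter] at hγ
    by_contra hγK
    exact hall γ hγ.1 hγK hγ.2

lemma Dset_subset_iff {w : V ≃ₗᵢ[ℝ] V} {J : Finset V} :
    Dset V Δ w ⊆ J ↔ ∀ γ ∈ Δ, γ ∉ J → ¬ IsNonneg V Δ (-(w γ)) := by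
  constructor
  · intro hs γ hγ hγJ hcon
    exact hγJ (hs (Finset.mem_filter.mpr ⟨hγ, hcon⟩))
  · intro hall γ hγ
    rw [Dset, Finset.mem_filter] at hγ
    by_contra hγJ
    exact hall γ hγ.1 hγJ hγ.2

/-- The affine descent set is never empty. -/
lemma Dtilde_nonempty (h : IsRootSystem V Φ Δ) (hθ : IsHighest V Φ Δ θ)
    {w : V ≃ₗᵢ[ℝ] V} (hw : w ∈ Weyl V Φ) : Dtilde V Δ θ w ≠ ∅ := by
  intro hemp
  have hall : ∀ α ∈ Δ, IsNonneg V Δ (w α) := by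
    intro α hα
    have : α ∉ Dtilde V Δ θ w := by rw [hemp]; simp
    rw [Dtilde, Finset.mem_filter, not_and] at this
    have h2 := this (Finset.mem_insert_of_mem hα)
    rw [dich h (weyl_maps_root h hw α (h.subset hα))] at h2
    exact not_not.mp h2
  obtain ⟨c, hc, hcθ⟩ := hθ.2.1
  have hwθ : IsNonneg V Δ (w θ) := by
    have : w θ = ∑ α ∈ Δ, c α • w α := by
      rw [hcθ, map_sum]
      exact Finset.sum_congr rfl fun α _ => by rw [map_smul]
    rw [this]
    exact isNonneg_sum (fun α _ => hc α) (fun α hα => hall α hα)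
  have : -θ ∈ Dtilde V Δ θ w := by
    rw [Dtilde, Finset.mem_filter]
    refine ⟨Finset.mem_insert_self _ _, ?_⟩
    rw [map_neg, neg_neg]
    exact hwθ
  rw [hemp] at this
  simp at this

/-- The affine descent set is never everything. -/
lemma Dtilde_ne_full (h : IsRootSystem V Φ Δ) (hθ : IsHighest V Φ Δ θ)
    {w : V ≃ₗᵢ[ℝ] V} (hw : w ∈ Weyl V Φ) : Dtilde V Δ θ w ≠ insert (-θ) Δ := by
  intro hfull
  have hall : ∀ α ∈ Δ, IsNonneg V Δ (-(w α)) := by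
    intro α hα
    have : α ∈ Dtilde V Δ θ w := by
      rw [hfull]; exact Finset.mem_insert_of_mem hα
    exact (Finset.mem_filter.mp this).2
  obtain ⟨c, hc, hcθ⟩ := hθ.2.1
  have hwθneg : IsNonneg V Δ (-(w θ)) := by
    have : -(w θ) = ∑ α ∈ Δ, c α • (-(w α)) := by
      rw [hcθ, map_sum, ← Finset.sum_neg_distrib]
      exact Finset.sum_congr rfl fun α _ => by rw [map_smul, smul_neg]
    rw [this]
    exact isNonneg_sum (fun α _ => hc α) (fun α hα => hall α hα)
  have hmem : -θ ∈ Dtilde V Δ θ w := by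
    rw [hfull]; exact Finset.mem_insert_self _ _
  rw [Dtilde, Finset.mem_filter, map_neg, neg_neg] at hmem
  exact not_both h (weyl_maps_root h hw θ hθ.1) hmem.2 hwθneg

/-- Uniqueness part of the matching step. -/
lemma step_unique (h : IsRootSystem V Φ Δ) {I : Finset V} (hI : I ⊆ Δ)
    {w' v v₁ v₂ : V ≃ₗᵢ[ℝ] V} (hw' : w' ∈ Weyl V Φ) (hv₁ : v₁ ∈ Weyl V Φ)
    (hg₁ : v₁ * v⁻¹ ∈ WI (V := V) I) (hg₂ : v₂ * v⁻¹ ∈ WI (V := V) I)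
    (hip₁ : IPos Δ I (w' * v₁⁻¹)) (hip₂ : IPos Δ I (w' * v₂⁻¹)) : v₁ = v₂ := by
  have hgmem : v₁ * v₂⁻¹ ∈ WI (V := V) I := by
    have : v₁ * v₂⁻¹ = (v₁ * v⁻¹) * (v₂ * v⁻¹)⁻¹ := by group
    rw [this]
    exact mul_mem hg₁ (inv_mem hg₂)
  have huW : w' * v₁⁻¹ ∈ Weyl V Φ := by
    have hv1W : v₁ ∈ Weyl V Φ := hv₁
    exact mul_mem hw' (inv_mem hv1W)
  have := ipos_unique h hI huW hgmem hip₁ (by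
    have : (w' * v₁⁻¹) * (v₁ * v₂⁻¹) = w' * v₂⁻¹ := by group
    rwa [this])
  have h2 : v₁ * v₂⁻¹ = 1 := this
  calc v₁ = (v₁ * v₂⁻¹) * v₂ := by group
    _ = v₂ := by rw [h2, one_mul]

/-- Existence part of the matching step. -/
lemma step_exists (h : IsRootSystem V Φ Δ) (hθ : IsHighest V Φ Δ θ)
    {I K : Finset V} (hI : I ⊆ Δ)
    {w w' v : V ≃ₗᵢ[ℝ] V} (hw : w ∈ Weyl V Φ) (hw' : w' ∈ Weyl V Φ)
    (hv : v ∈ Weyl V Φ) (hDT : Dtilde V Δ θ w = Dtilde V Δ θ w')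
    (hvK : Dtilde V Δ θ v ⊆ K) (hwip : IPos Δ I (w * v⁻¹)) :
    ∃ v', v' ∈ Weyl V Φ ∧ v' * v⁻¹ ∈ WI (V := V) I ∧ Dtilde V Δ θ v' ⊆ K ∧
      IPos Δ I (w' * v'⁻¹) := by
  have he'W : w' * v⁻¹ ∈ Weyl V Φ := mul_mem hw' (inv_mem hv)
  obtain ⟨g, hgWI, hgIP⟩ := ipos_exists h hI he'W
  refine ⟨g⁻¹ * v, ?_, ?_, ?_, ?_⟩
  · exact mul_mem (inv_mem (WI_le_weyl h hI hgWI)) hv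
  · have : (g⁻¹ * v) * v⁻¹ = g⁻¹ := by group
    rw [this]
    exact inv_mem hgWI
  · -- the affine descent condition
    rw [Dtilde_subset_iff]
    intro γ hγt hγK
    have hγΦ : γ ∈ Φ := root_of_tilde h hθ hγt
    have hvγΦ : v γ ∈ Φ := weyl_maps_root h hv γ hγΦ
    have hvγpos : IsNonneg V Δ (v γ) := by
      have := Dtilde_subset_iff.mp hvK γ hγt hγK
      rw [dich h hvγΦ] at this
      exact not_not.mp this
    have hv'γ : (g⁻¹ * v) γ = g⁻¹ (v γ) := rfl
    have hv'W : g⁻¹ * v ∈ Weyl V Φ :=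
      mul_mem (inv_mem (WI_le_weyl h hI hgWI)) hv
    have hv'γΦ : (g⁻¹ * v) γ ∈ Φ := weyl_maps_root h hv'W γ hγΦ
    rw [dich h hv'γΦ, not_not]
    by_cases hsp : v γ ∈ Submodule.span ℝ (I : Set V)
    · -- inside the parabolic subsystem
      have hwγpos : IsNonneg V Δ (w γ) := by
        have := ipos_posI h hI hwip hsp hvγpos
        rw [mul_apply] at this
        have hrw : v⁻¹ (v γ) = γ := by
          rw [LinearIsometryEquiv.inv_def]; exact v.symm_apply_apply γ
        rwa [hrw] at this
      have hw'γpos : IsNonneg V Δ (w' γ) := by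
        have hwγΦ : w γ ∈ Φ := weyl_maps_root h hw γ hγΦ
        have hw'γΦ : w' γ ∈ Φ := weyl_maps_root h hw' γ hγΦ
        have hnmem : γ ∉ Dtilde V Δ θ w := by
          rw [Dtilde, Finset.mem_filter, not_and]
          intro _
          rw [dich h hwγΦ, not_not]
          exact hwγpos
        rw [hDT] at hnmem
        rw [Dtilde, Finset.mem_filter, not_and] at hnmem
        have := hnmem hγt
        rw [dich h hw'γΦ] at this
        exact not_not.mp this
      -- transfer through the I-positive element w' * v'⁻¹
      have hu'IP : IPos Δ I (w' * (g⁻¹ * v)⁻¹) := by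
        have : w' * (g⁻¹ * v)⁻¹ = (w' * v⁻¹) * g := by group
        rw [this]
        exact hgIP
      have hu'W : w' * (g⁻¹ * v)⁻¹ ∈ Weyl V Φ := mul_mem hw' (inv_mem hv'W)
      have hv'γsp : (g⁻¹ * v) γ ∈ Submodule.span ℝ (I : Set V) := by
        rw [hv'γ]
        exact WI_maps_span (inv_mem hgWI) hsp
      have happ : (w' * (g⁻¹ * v)⁻¹) ((g⁻¹ * v) γ) = w' γ := by
        rw [mul_apply]
        congr 1
        rw [LinearIsometryEquiv.inv_def]
        exact (g⁻¹ * v).symm_apply_apply γ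
      have := (ipos_sign_iff h hI hu'W hu'IP hv'γΦ hv'γsp).mp ?_
      · exact this
      · rw [happ]
        exact hw'γpos
    · -- outside the parabolic subsystem: signs are stable under WI
      rw [hv'γ]
      exact span_sign_out h hI (inv_mem hgWI) hvγΦ hsp hvγpos
  · have : w' * (g⁻¹ * v)⁻¹ = (w' * v⁻¹) * g := by group
    rw [this]
    exact hgIP

end AffD
set_option linter.unusedSectionVars false
namespace AffD

/-- Möbius-type alternating sum over a powerset. -/
lemma mobius_powerset {α : Type*} [DecidableEq α] (M E : Finset α) :
    ∑ L ∈ M.powerset, (if E ⊆ L then ((-1 : ℤ)) ^ ((M \ L).card) else 0)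
      = if E = M then 1 else 0 := by
  by_cases hEM : E ⊆ M
  · rw [← Finset.sum_filter]
    have hbij : ∑ L ∈ M.powerset.filter (fun L => E ⊆ L), ((-1 : ℤ)) ^ ((M \ L).card)
        = ∑ T ∈ (M \ E).powerset, ((-1 : ℤ)) ^ (((M \ E)).card - T.card) := by
      apply Finset.sum_nbij' (i := fun L => L \ E) (j := fun T => E ∪ T)
      · intro L hL
        rw [Finset.mem_filter, Finset.mem_powerset] at hL
        rw [Finset.mem_powerset]
        exact Finset.sdiff_subset_sdiff hL.1 (le_refl _)
      · intro T hT
        rw [Finset.mem_powerset] at hT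
        rw [Finset.mem_filter, Finset.mem_powerset]
        constructor
        · exact Finset.union_subset hEM (hT.trans (Finset.sdiff_subset))
        · exact Finset.subset_union_left
      · intro L hL
        rw [Finset.mem_filter] at hL
        exact Finset.union_sdiff_of_subset hL.2
      · intro T hT
        rw [Finset.mem_powerset] at hT
        have hdisj : Disjoint E T := by
          have h0 : Disjoint (M \ E) E := Finset.sdiff_disjoint
          exact (Finset.disjoint_of_subset_left hT h0).symm
        exact Finset.union_sdiff_cancel_left hdisj
      · intro L hL
        rw [Finset.mem_filter, Finset.mem_powerset] at hL
        congr 1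
        have h1 : M \ (L \ E) ⊇ M \ L := Finset.sdiff_subset_sdiff (le_refl _)
          (Finset.sdiff_subset)
        -- (M \ E) \ (L \ E) = M \ L
        have h2 : (M \ E) \ (L \ E) = M \ L := by
          ext x
          simp only [Finset.mem_sdiff]
          constructor
          · rintro ⟨⟨hxM, hxE⟩, hx2⟩
            refine ⟨hxM, fun hxL => hx2 ⟨hxL, hxE⟩⟩
          · rintro ⟨hxM, hxL⟩
            refine ⟨⟨hxM, fun hxE => hxL (hL.2 hxE)⟩, fun hx => hxL hx.1⟩
        rw [← h2, Finset.card_sdiff_of_subset (Finset.sdiff_subset_sdiff hL.1 (le_refl _))]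
    rw [hbij]
    have hfact : ∀ T ∈ (M \ E).powerset,
        ((-1 : ℤ)) ^ ((M \ E).card - T.card)
          = ((-1 : ℤ)) ^ ((M \ E).card) * ((-1 : ℤ)) ^ (T.card) := by
      intro T hT
      rw [Finset.mem_powerset] at hT
      have hle : T.card ≤ (M \ E).card := Finset.card_le_card hT
      have : ((-1 : ℤ)) ^ ((M \ E).card) =
          ((-1 : ℤ)) ^ ((M \ E).card - T.card) * ((-1 : ℤ)) ^ (T.card) := by
        rw [← pow_add, Nat.sub_add_cancel hle]
      rw [this, mul_assoc, ← pow_add]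
      have : ((-1 : ℤ)) ^ (T.card + T.card) = 1 := by
        rw [← two_mul, pow_mul]
        norm_num
      rw [this, mul_one]
    rw [Finset.sum_congr rfl hfact, ← Finset.mul_sum,
      Finset.sum_powerset_neg_one_pow_card]
    by_cases hve : M \ E = ∅
    · have hEeq : E = M := by
        rw [Finset.sdiff_eq_empty_iff_subset] at hve
        exact Finset.Subset.antisymm hEM hve
      rw [if_pos hve, if_pos hEeq, hve]
      simp
    · have hEne : E ≠ M := by
        intro rfl'
        rw [rfl'] at hve
        simp at hve
      rw [if_neg hve, if_neg hEne, mul_zero]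
  · have hterm : ∀ L ∈ M.powerset,
        (if E ⊆ L then ((-1 : ℤ)) ^ ((M \ L).card) else 0) = 0 := by
      intro L hL
      rw [Finset.mem_powerset] at hL
      rw [if_neg (fun hEL => hEM (hEL.trans hL))]
    rw [Finset.sum_congr rfl hterm, Finset.sum_const_zero]
    rw [if_neg (fun hEq => hEM (le_of_eq hEq))]

/-- change of summation domain for guarded sums. -/
lemma sum_guard_domain {α : Type*} [DecidableEq α] (Δt : Finset α) (S : Finset (Finset α))
    (hS : ∀ L, L ∈ S ↔ L ⊆ Δt ∧ L ≠ ∅ ∧ L ≠ Δt)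
    (M E : Finset α) (hM : M ∈ S) (hE : E ≠ ∅) (x : Finset α → ℤ) :
    ∑ L ∈ S, (if E ⊆ L ∧ L ⊆ M then x L else 0)
      = ∑ L ∈ M.powerset, (if E ⊆ L then x L else 0) := by
  have hMs := (hS M).mp hM
  have h1 : ∑ L ∈ S, (if E ⊆ L ∧ L ⊆ M then x L else 0)
      = ∑ L ∈ Δt.powerset, (if E ⊆ L ∧ L ⊆ M then x L else 0) := by
    apply Finset.sum_subset
    · intro L hL
      rw [Finset.mem_powerset]
      exact ((hS L).mp hL).1
    · intro L hL hLS
      rw [Finset.mem_powerset] at hL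
      rw [if_neg]
      rintro ⟨hEL, hLM⟩
      apply hLS
      rw [hS]
      refine ⟨hL, ?_, ?_⟩
      · intro rfl'
        rw [rfl'] at hEL
        exact hE (Finset.subset_empty.mp hEL)
      · intro rfl'
        exact hMs.2.2 (Finset.Subset.antisymm hMs.1 (by rw [← rfl']; exact hLM))
  have h2 : ∑ L ∈ M.powerset, (if E ⊆ L then x L else 0)
      = ∑ L ∈ Δt.powerset, (if E ⊆ L ∧ L ⊆ M then x L else 0) := by
    have hstep : ∑ L ∈ M.powerset, (if E ⊆ L then x L else 0)
        = ∑ L ∈ M.powerset, (if E ⊆ L ∧ L ⊆ M then x L else 0) := by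
      apply Finset.sum_congr rfl
      intro L hL
      rw [Finset.mem_powerset] at hL
      by_cases hEL : E ⊆ L
      · rw [if_pos hEL, if_pos ⟨hEL, hL⟩]
      · rw [if_neg hEL, if_neg (fun hc => hEL hc.1)]
    rw [hstep]
    apply Finset.sum_subset
    · intro L hL
      rw [Finset.mem_powerset] at hL ⊢
      exact hL.trans hMs.1
    · intro L _ hLM
      rw [Finset.mem_powerset] at hLM
      rw [if_neg (fun hc => hLM hc.2)]
  rw [h1, h2]

end AffD
set_option linter.unusedSectionVars false
namespace AffD

variable {V : Type*} [NormedAddCommGroup V] [InnerProductSpace ℝ V] [FiniteDimensional ℝ V]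
variable {Φ Δ : Finset V} {θ : V}

lemma dset_ipos (h : IsRootSystem V Φ Δ) {u : V ≃ₗᵢ[ℝ] V} (hu : u ∈ Weyl V Φ)
    {J : Finset V} : Dset V Δ u ⊆ J ↔ IPos Δ (Δ \ J) u := by
  constructor
  · intro hs α hα
    rw [Finset.mem_sdiff] at hα
    have := Dset_subset_iff.mp hs α hα.1 hα.2
    rw [dich h (weyl_maps_root h hu α (h.subset hα.1))] at this
    exact not_not.mp this
  · intro hIP
    rw [Dset_subset_iff]
    intro γ hγΔ hγJ
    have := hIP γ (Finset.mem_sdiff.mpr ⟨hγΔ, hγJ⟩)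
    rw [dich h (weyl_maps_root h hu γ (h.subset hγΔ))]
    exact not_not_intro this

lemma xT_apply [Fintype ↥(Weyl V Φ)] (K : Finset V) (w₀ : ↥(Weyl V Φ)) :
    (xT V Φ Δ θ K).coeff w₀
      = if Dtilde V Δ θ (↑w₀ : V ≃ₗᵢ[ℝ] V) ⊆ K then (1 : ℤ) else 0 := by
  rw [xT, finsum_eq_sum_of_fintype, MonoidAlgebra.coeff_sum, Finset.sum_apply']
  have hterm : ∀ w : ↥(Weyl V Φ),
      (if Dtilde V Δ θ (↑w : V ≃ₗᵢ[ℝ] V) ⊆ K then MonoidAlgebra.single w (1:ℤ) else 0).coeff w₀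
      = if w = w₀ then (if Dtilde V Δ θ (↑w : V ≃ₗᵢ[ℝ] V) ⊆ K then (1:ℤ) else 0) else 0 := by
    intro w
    by_cases h2 : w = w₀
    · subst h2
      by_cases h1 : Dtilde V Δ θ (↑w : V ≃ₗᵢ[ℝ] V) ⊆ K <;>
        simp [h1, MonoidAlgebra.single_apply]
    · by_cases h1 : Dtilde V Δ θ (↑w : V ≃ₗᵢ[ℝ] V) ⊆ K <;>
        simp [h1, h2, MonoidAlgebra.single_apply]
  rw [Finset.sum_congr rfl (fun w _ => hterm w), Finset.sum_ite_eq' Finset.univ w₀]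
  simp

lemma prod_apply (h : IsRootSystem V Φ Δ) [Fintype ↥(Weyl V Φ)] (J K : Finset V)
    (w₀ : ↥(Weyl V Φ)) :
    (xJ V Φ Δ J * xT V Φ Δ θ K).coeff w₀
      = ((Finset.univ.filter (fun v : ↥(Weyl V Φ) =>
          Dtilde V Δ θ (↑v : V ≃ₗᵢ[ℝ] V) ⊆ K ∧
          Dset V Δ (↑(w₀ * v⁻¹) : V ≃ₗᵢ[ℝ] V) ⊆ J)).card : ℤ) := by
  rw [xJ, xT, finsum_eq_sum_of_fintype, finsum_eq_sum_of_fintype, Finset.sum_mul_sum]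
  have hkey : ∀ u v : ↥(Weyl V Φ),
      (if Dset V Δ (↑u : V ≃ₗᵢ[ℝ] V) ⊆ J then MonoidAlgebra.single u (1:ℤ) else 0) *
        (if Dtilde V Δ θ (↑v : V ≃ₗᵢ[ℝ] V) ⊆ K then MonoidAlgebra.single v (1:ℤ) else 0)
      = if Dset V Δ (↑u : V ≃ₗᵢ[ℝ] V) ⊆ J ∧ Dtilde V Δ θ (↑v : V ≃ₗᵢ[ℝ] V) ⊆ K
          then MonoidAlgebra.single (u * v) (1:ℤ) else 0 := by
    intro u v
    by_cases h1 : Dset V Δ (↑u : V ≃ₗᵢ[ℝ] V) ⊆ J <;>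
      by_cases h2 : Dtilde V Δ θ (↑v : V ≃ₗᵢ[ℝ] V) ⊆ K <;>
      simp [h1, h2, MonoidAlgebra.single_mul_single]
  rw [Finset.sum_congr rfl (fun u _ => Finset.sum_congr rfl (fun v _ => hkey u v))]
  simp only [MonoidAlgebra.coeff_sum, Finset.sum_apply']
  have hterm : ∀ u v : ↥(Weyl V Φ),
      (if Dset V Δ (↑u : V ≃ₗᵢ[ℝ] V) ⊆ J ∧ Dtilde V Δ θ (↑v : V ≃ₗᵢ[ℝ] V) ⊆ K
          then MonoidAlgebra.single (u * v) (1:ℤ) else 0).coeff w₀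
      = if u = w₀ * v⁻¹ then
          (if Dtilde V Δ θ (↑v : V ≃ₗᵢ[ℝ] V) ⊆ K ∧
              Dset V Δ (↑(w₀ * v⁻¹) : V ≃ₗᵢ[ℝ] V) ⊆ J then (1:ℤ) else 0) else 0 := by
    intro u v
    by_cases h2 : u = w₀ * v⁻¹
    · subst h2
      have hmul : (w₀ * v⁻¹) * v = w₀ := by group
      rw [if_pos rfl]
      by_cases h1 : Dset V Δ (↑(w₀ * v⁻¹) : V ≃ₗᵢ[ℝ] V) ⊆ J <;>
        by_cases h3 : Dtilde V Δ θ (↑v : V ≃ₗᵢ[ℝ] V) ⊆ K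
      · rw [if_pos ⟨h1, h3⟩, if_pos ⟨h3, h1⟩, hmul, MonoidAlgebra.single_apply, if_pos rfl]
      · rw [if_neg (fun hc => h3 hc.2), if_neg (fun hc => h3 hc.1)]; simp
      · rw [if_neg (fun hc => h1 hc.1), if_neg (fun hc => h1 hc.2)]; simp
      · rw [if_neg (fun hc => h1 hc.1), if_neg (fun hc => h3 hc.1)]; simp
    · have hne : ¬ (u * v = w₀) := by
        intro hc
        apply h2
        rw [← hc]
        group
      rw [if_neg h2]
      by_cases h1 : Dset V Δ (↑u : V ≃ₗᵢ[ℝ] V) ⊆ J ∧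
          Dtilde V Δ θ (↑v : V ≃ₗᵢ[ℝ] V) ⊆ K
      · rw [if_pos h1, MonoidAlgebra.single_apply, if_neg hne]
      · rw [if_neg h1]; simp
  rw [Finset.sum_congr rfl (fun u _ => Finset.sum_congr rfl (fun v _ => hterm u v))]
  rw [Finset.sum_comm]
  rw [Finset.sum_congr rfl (fun v _ => Finset.sum_ite_eq' Finset.univ (w₀ * v⁻¹)
    (fun _ => (if Dtilde V Δ θ (↑v : V ≃ₗᵢ[ℝ] V) ⊆ K ∧
        Dset V Δ (↑(w₀ * v⁻¹) : V ≃ₗᵢ[ℝ] V) ⊆ J then (1:ℤ) else 0)))]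
  simp only [Finset.mem_univ, if_true]
  rw [Finset.sum_boole]

/-- packaged transfer function -/
noncomputable def trans1 (h : IsRootSystem V Φ Δ) (hθ : IsHighest V Φ Δ θ)
    {I K : Finset V} (hI : I ⊆ Δ) (w w' : V ≃ₗᵢ[ℝ] V) (hw : w ∈ Weyl V Φ)
    (hw' : w' ∈ Weyl V Φ) (hDT : Dtilde V Δ θ w = Dtilde V Δ θ w')
    (v : ↥(Weyl V Φ)) (hvK : Dtilde V Δ θ (↑v : V ≃ₗᵢ[ℝ] V) ⊆ K)
    (hwip : IPos Δ I (w * (↑v : V ≃ₗᵢ[ℝ] V)⁻¹)) : ↥(Weyl V Φ) :=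
  ⟨(step_exists h hθ hI hw hw' v.2 hDT hvK hwip).choose,
    (step_exists h hθ hI hw hw' v.2 hDT hvK hwip).choose_spec.1⟩

lemma trans1_spec (h : IsRootSystem V Φ Δ) (hθ : IsHighest V Φ Δ θ)
    {I K : Finset V} (hI : I ⊆ Δ) (w w' : V ≃ₗᵢ[ℝ] V) (hw : w ∈ Weyl V Φ)
    (hw' : w' ∈ Weyl V Φ) (hDT : Dtilde V Δ θ w = Dtilde V Δ θ w')
    (v : ↥(Weyl V Φ)) (hvK : Dtilde V Δ θ (↑v : V ≃ₗᵢ[ℝ] V) ⊆ K)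
    (hwip : IPos Δ I (w * (↑v : V ≃ₗᵢ[ℝ] V)⁻¹)) :
    (↑(trans1 h hθ hI w w' hw hw' hDT v hvK hwip) : V ≃ₗᵢ[ℝ] V) * (↑v : V ≃ₗᵢ[ℝ] V)⁻¹
        ∈ WI (V := V) I ∧
    Dtilde V Δ θ (↑(trans1 h hθ hI w w' hw hw' hDT v hvK hwip) : V ≃ₗᵢ[ℝ] V) ⊆ K ∧
    IPos Δ I (w' * (↑(trans1 h hθ hI w w' hw hw' hDT v hvK hwip) : V ≃ₗᵢ[ℝ] V)⁻¹) :=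
  ⟨(step_exists h hθ hI hw hw' v.2 hDT hvK hwip).choose_spec.2.1,
   (step_exists h hθ hI hw hw' v.2 hDT hvK hwip).choose_spec.2.2.1,
   (step_exists h hθ hI hw hw' v.2 hDT hvK hwip).choose_spec.2.2.2⟩

lemma WI_swap {I : Finset V} {a b : V ≃ₗᵢ[ℝ] V} (hab : a * b⁻¹ ∈ WI (V := V) I) :
    b * a⁻¹ ∈ WI (V := V) I := by
  have := inv_mem hab
  rwa [mul_inv_rev, inv_inv] at this

/-- constancy of the product coefficients on affine descent classes -/
lemma card_const (h : IsRootSystem V Φ Δ) (hθ : IsHighest V Φ Δ θ)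
    [Fintype ↥(Weyl V Φ)] (J K : Finset V) {w w' : ↥(Weyl V Φ)}
    (hDT : Dtilde V Δ θ (↑w : V ≃ₗᵢ[ℝ] V) = Dtilde V Δ θ (↑w' : V ≃ₗᵢ[ℝ] V)) :
    (Finset.univ.filter (fun v : ↥(Weyl V Φ) =>
      Dtilde V Δ θ (↑v : V ≃ₗᵢ[ℝ] V) ⊆ K ∧
      Dset V Δ (↑(w * v⁻¹) : V ≃ₗᵢ[ℝ] V) ⊆ J)).card
    = (Finset.univ.filter (fun v : ↥(Weyl V Φ) =>
      Dtilde V Δ θ (↑v : V ≃ₗᵢ[ℝ] V) ⊆ K ∧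
      Dset V Δ (↑(w' * v⁻¹) : V ≃ₗᵢ[ℝ] V) ⊆ J)).card := by
  have hI : (Δ \ J : Finset V) ⊆ Δ := Finset.sdiff_subset
  have hmemW : ∀ (a b : ↥(Weyl V Φ)),
      (↑a : V ≃ₗᵢ[ℝ] V) * (↑b : V ≃ₗᵢ[ℝ] V)⁻¹ ∈ Weyl V Φ :=
    fun a b => mul_mem a.2 (inv_mem b.2)
  apply Finset.card_bij (i := fun v hv => trans1 h hθ hI ↑w ↑w' w.2 w'.2 hDT v
    ((Finset.mem_filter.mp hv).2.1)
    ((dset_ipos h (hmemW w v)).mp ((Finset.mem_filter.mp hv).2.2)))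
  · -- maps to target
    intro v hv
    obtain ⟨hWI, hK', hIP⟩ := trans1_spec h hθ hI ↑w ↑w' w.2 w'.2 hDT v
      ((Finset.mem_filter.mp hv).2.1)
      ((dset_ipos h (hmemW w v)).mp ((Finset.mem_filter.mp hv).2.2))
    rw [Finset.mem_filter]
    exact ⟨Finset.mem_univ _, hK',
      (dset_ipos h (hmemW w' _)).mpr hIP⟩
  · -- injective
    intro v₁ hv₁ v₂ hv₂ heq
    obtain ⟨hWI₁, hK₁, hIP₁⟩ := trans1_spec h hθ hI ↑w ↑w' w.2 w'.2 hDT v₁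
      ((Finset.mem_filter.mp hv₁).2.1)
      ((dset_ipos h (hmemW w v₁)).mp ((Finset.mem_filter.mp hv₁).2.2))
    obtain ⟨hWI₂, hK₂, hIP₂⟩ := trans1_spec h hθ hI ↑w ↑w' w.2 w'.2 hDT v₂
      ((Finset.mem_filter.mp hv₂).2.1)
      ((dset_ipos h (hmemW w v₂)).mp ((Finset.mem_filter.mp hv₂).2.2))
    set b := trans1 h hθ hI ↑w ↑w' w.2 w'.2 hDT v₁
      ((Finset.mem_filter.mp hv₁).2.1)
      ((dset_ipos h (hmemW w v₁)).mp ((Finset.mem_filter.mp hv₁).2.2)) with hbdef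
    rw [← heq] at hWI₂
    apply Subtype.ext
    exact step_unique h hI (w' := (↑w : V ≃ₗᵢ[ℝ] V)) (v := (↑b : V ≃ₗᵢ[ℝ] V))
      w.2 v₁.2 (WI_swap hWI₁) (WI_swap hWI₂)
      ((dset_ipos h (hmemW w v₁)).mp ((Finset.mem_filter.mp hv₁).2.2))
      ((dset_ipos h (hmemW w v₂)).mp ((Finset.mem_filter.mp hv₂).2.2))
  · -- surjective
    intro b hb
    have hbK := (Finset.mem_filter.mp hb).2.1
    have hbIP := (dset_ipos h (hmemW w' b)).mp ((Finset.mem_filter.mp hb).2.2)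
    set a := trans1 h hθ hI ↑w' ↑w w'.2 w.2 hDT.symm b hbK hbIP with hadef
    obtain ⟨haWI, haK, haIP⟩ := trans1_spec h hθ hI ↑w' ↑w w'.2 w.2 hDT.symm b hbK hbIP
    have haMem : a ∈ Finset.univ.filter (fun v : ↥(Weyl V Φ) =>
        Dtilde V Δ θ (↑v : V ≃ₗᵢ[ℝ] V) ⊆ K ∧
        Dset V Δ (↑(w * v⁻¹) : V ≃ₗᵢ[ℝ] V) ⊆ J) := by
      rw [Finset.mem_filter]
      exact ⟨Finset.mem_univ _, haK, (dset_ipos h (hmemW w a)).mpr haIP⟩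
    refine ⟨a, haMem, ?_⟩
    obtain ⟨hWI₃, hK₃, hIP₃⟩ := trans1_spec h hθ hI ↑w ↑w' w.2 w'.2 hDT a
      ((Finset.mem_filter.mp haMem).2.1)
      ((dset_ipos h (hmemW w a)).mp ((Finset.mem_filter.mp haMem).2.2))
    apply Subtype.ext
    exact step_unique h hI (w' := (↑w' : V ≃ₗᵢ[ℝ] V)) (v := (↑a : V ≃ₗᵢ[ℝ] V))
      w'.2 (trans1 h hθ hI ↑w ↑w' w.2 w'.2 hDT a
        ((Finset.mem_filter.mp haMem).2.1)
        ((dset_ipos h (hmemW w a)).mp ((Finset.mem_filter.mp haMem).2.2))).2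
      hWI₃ (WI_swap haWI) hIP₃ hbIP

end AffD

/-- **The module of affine descent classes.** For an irreducible crystallographic root
system with highest root `θ` and lowest root `α₀ = -θ`, the span of the elements
`x̃_K = Σ_{D̃(w) ⊆ K} w` (for `K` a nonempty proper subset of `Δ̃ = Δ ∪ {α₀}`) is a left
module over Solomon's descent algebra: each product `x_J · x̃_K` is an integer linear
combination of the `x̃_L`. -/
theorem affine_descents_module (Φ Δ : Finset V) (h : IsRootSystem V Φ Δ)
    (hcrys : Crystallographic V Φ) (hirr : IrreducibleSystem V Δ)
    (hfin : Finite (Weyl V Φ)) (θ : V) (hθ : IsHighest V Φ Δ θ)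
    (J : Finset V) (hJ : J ⊆ Δ)
    (K : Finset V) (hK : K ⊆ insert (-θ) Δ) (hKne : K ≠ ∅) (hKpr : K ≠ insert (-θ) Δ) :
    ∃ c : Finset V → ℤ,
      xJ V Φ Δ J * xT V Φ Δ θ K =
        ∑ L ∈ ((insert (-θ) Δ).powerset.erase ∅).erase (insert (-θ) Δ), c L • xT V Φ Δ θ L := by
  classical
  open AffD in
  haveI : Fintype ↥(Weyl V Φ) := Fintype.ofFinite _
  set Δt : Finset V := insert (-θ) Δ with hΔt
  set S : Finset (Finset V) := (Δt.powerset.erase ∅).erase Δt with hSdef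
  have hSmem : ∀ L, L ∈ S ↔ L ⊆ Δt ∧ L ≠ ∅ ∧ L ≠ Δt := by
    intro L
    rw [hSdef, Finset.mem_erase, Finset.mem_erase, Finset.mem_powerset]
    tauto
  set N : ↥(Weyl V Φ) → ℤ := fun w => ((Finset.univ.filter (fun v : ↥(Weyl V Φ) =>
      Dtilde V Δ θ (↑v : V ≃ₗᵢ[ℝ] V) ⊆ K ∧
      Dset V Δ (↑(w * v⁻¹) : V ≃ₗᵢ[ℝ] V) ⊆ J)).card : ℤ) with hN
  have hNconst : ∀ w w' : ↥(Weyl V Φ),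
      Dtilde V Δ θ (↑w : V ≃ₗᵢ[ℝ] V) = Dtilde V Δ θ (↑w' : V ≃ₗᵢ[ℝ] V) → N w = N w' := by
    intro w w' hDT
    rw [hN]
    exact_mod_cast congrArg Int.ofNat (card_const h hθ J K hDT)
  set a : Finset V → ℤ := fun L =>
    if hx : ∃ w : ↥(Weyl V Φ), Dtilde V Δ θ (↑w : V ≃ₗᵢ[ℝ] V) = L then N hx.choose else 0
    with hadef
  have haN : ∀ w : ↥(Weyl V Φ), a (Dtilde V Δ θ (↑w : V ≃ₗᵢ[ℝ] V)) = N w := by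
    intro w
    have hx : ∃ w' : ↥(Weyl V Φ),
        Dtilde V Δ θ (↑w' : V ≃ₗᵢ[ℝ] V) = Dtilde V Δ θ (↑w : V ≃ₗᵢ[ℝ] V) := ⟨w, rfl⟩
    rw [hadef]
    simp only [dif_pos hx]
    exact hNconst _ _ hx.choose_spec
  refine ⟨fun L => ∑ M ∈ S.filter (fun M => L ⊆ M), (-1 : ℤ) ^ ((M \ L).card) * a M, ?_⟩
  apply MonoidAlgebra.coeff_injective
  apply Finsupp.ext
  intro w₀
  rw [prod_apply h J K w₀]
  have hRHS : (∑ L ∈ S, (∑ M ∈ S.filter (fun M => L ⊆ M),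
        (-1:ℤ) ^ ((M \ L).card) * a M) • xT V Φ Δ θ L).coeff w₀
      = ∑ L ∈ S, (∑ M ∈ S.filter (fun M => L ⊆ M), (-1:ℤ) ^ ((M \ L).card) * a M) *
          (if Dtilde V Δ θ (↑w₀ : V ≃ₗᵢ[ℝ] V) ⊆ L then 1 else 0) := by
    rw [MonoidAlgebra.coeff_sum, Finset.sum_apply']
    exact Finset.sum_congr rfl (fun L _ => by
      rw [MonoidAlgebra.coeff_smul, Finsupp.smul_apply, xT_apply, smul_eq_mul])
  rw [hRHS]
  set E : Finset V := Dtilde V Δ θ (↑w₀ : V ≃ₗᵢ[ℝ] V) with hEdef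
  have hES : E ∈ S := by
    rw [hSmem]
    refine ⟨?_, Dtilde_nonempty h hθ w₀.2, Dtilde_ne_full h hθ w₀.2⟩
    rw [hEdef, Dtilde]
    exact Finset.filter_subset _ _
  have hEne : E ≠ ∅ := Dtilde_nonempty h hθ w₀.2
  -- step 1-3: merge the guards
  have hstep1 : ∑ L ∈ S, (∑ M ∈ S.filter (fun M => L ⊆ M),
        (-1:ℤ) ^ ((M \ L).card) * a M) * (if E ⊆ L then 1 else 0)
      = ∑ L ∈ S, ∑ M ∈ S, (if E ⊆ L ∧ L ⊆ M then (-1:ℤ) ^ ((M \ L).card) * a M else 0) := by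
    apply Finset.sum_congr rfl
    intro L _
    rw [Finset.sum_filter]
    by_cases hEL : E ⊆ L
    · rw [if_pos hEL, mul_one]
      apply Finset.sum_congr rfl
      intro M _
      by_cases hLM : L ⊆ M
      · rw [if_pos hLM, if_pos ⟨hEL, hLM⟩]
      · rw [if_neg hLM, if_neg (fun hc => hLM hc.2)]
    · rw [if_neg hEL, mul_zero]
      rw [eq_comm]
      apply Finset.sum_eq_zero
      intro M _
      rw [if_neg (fun hc => hEL hc.1)]
  rw [hstep1, Finset.sum_comm]
  -- step 5-6: inner Möbius sums
  have hstep2 : ∀ M ∈ S, ∑ L ∈ S, (if E ⊆ L ∧ L ⊆ M then (-1:ℤ) ^ ((M \ L).card) * a M else 0)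
      = a M * (if E = M then 1 else 0) := by
    intro M hM
    have hfac : ∑ L ∈ S, (if E ⊆ L ∧ L ⊆ M then (-1:ℤ) ^ ((M \ L).card) * a M else 0)
        = a M * ∑ L ∈ S, (if E ⊆ L ∧ L ⊆ M then (-1:ℤ) ^ ((M \ L).card) else 0) := by
      rw [Finset.mul_sum]
      apply Finset.sum_congr rfl
      intro L _
      by_cases hc : E ⊆ L ∧ L ⊆ M
      · rw [if_pos hc, if_pos hc, mul_comm]
      · rw [if_neg hc, if_neg hc, mul_zero]
    rw [hfac, sum_guard_domain Δt S hSmem M E hM hEne, mobius_powerset]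
  rw [Finset.sum_congr rfl hstep2]
  -- step 7: collapse
  have hstep3 : ∑ M ∈ S, a M * (if E = M then 1 else 0)
      = ∑ M ∈ S, (if M = E then a M else 0) := by
    apply Finset.sum_congr rfl
    intro M _
    by_cases hc : E = M
    · rw [if_pos hc, if_pos hc.symm, mul_one]
    · rw [if_neg hc, if_neg (fun hc' => hc hc'.symm), mul_zero]
  rw [hstep3, Finset.sum_ite_eq' S E (fun M => a M), if_pos hES]
  exact (haN w₀).symm

end
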